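/- Let 𝓛 be the set of BMS transformations with data of the form (M, 0) (the 'Lorentz' elements) and 𝓢 the supertranslations. Then 𝓛 is a subgroup of 𝓑 with 𝓛 ∩ 𝓢 = {identity}, and every element b ∈ 𝓑 admits a unique factorization b = Λ ∘ s with Λ ∈ 𝓛 and s ∈ 𝓢; explicitly, the BMS transformation with data (M, α) equals the composite of the element with data (M, 0) after the supertranslation with data (1, α). -/

import Mathlib

noncomputable section

open Matrix

/-- `SL(2, ℂ)`. -/
abbrev SL2C := Matrix.SpecialLinearGroup (Fin 2) ℂ

/-- The complex projective line `ℙ¹(ℂ)`, the projectivization of `ℂ²`. -/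
abbrev P1C := Projectivization ℂ (Fin 2 → ℂ)

instance : Fact (Even (Fintype.card (Fin 2))) := ⟨⟨1, rfl⟩⟩

/-- The squared standard Hermitian norm `‖v‖²` of `v ∈ ℂ²`. -/
def hermNormSq (v : Fin 2 → ℂ) : ℝ := (star v ⬝ᵥ v).re

theorem SL2C.mulVec_ne_zero (M : SL2C) {v : Fin 2 → ℂ} (hv : v ≠ 0) :
    (M : Matrix (Fin 2) (Fin 2) ℂ).mulVec v ≠ 0 := by
  intro h
  apply hv
  have hMM : ((M⁻¹ : SL2C) : Matrix (Fin 2) (Fin 2) ℂ) * (M : Matrix (Fin 2) (Fin 2) ℂ) = 1 := by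
    rw [← Matrix.SpecialLinearGroup.coe_mul, inv_mul_cancel,
      Matrix.SpecialLinearGroup.coe_one]
  calc v = (((M⁻¹ : SL2C) : Matrix (Fin 2) (Fin 2) ℂ) *
          (M : Matrix (Fin 2) (Fin 2) ℂ)).mulVec v := by rw [hMM, Matrix.one_mulVec]
    _ = ((M⁻¹ : SL2C) : Matrix (Fin 2) (Fin 2) ℂ).mulVec
          ((M : Matrix (Fin 2) (Fin 2) ℂ).mulVec v) := by rw [Matrix.mulVec_mulVec]
    _ = 0 := by rw [h, Matrix.mulVec_zero]

/-- The action of `SL(2, ℂ)` on `ℙ¹(ℂ)`: `M • [v] = [M v]`. -/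
def mobAct (M : SL2C) (p : P1C) : P1C :=
  Projectivization.mk ℂ ((M : Matrix (Fin 2) (Fin 2) ℂ).mulVec p.rep)
    (SL2C.mulVec_ne_zero M p.rep_nonzero)

/-- The conformal factor `K_M : ℙ¹(ℂ) → ℝ`, `K_M([v]) = ‖v‖² / ‖M v‖²`. -/
def Kconf (M : SL2C) (p : P1C) : ℝ :=
  hermNormSq p.rep / hermNormSq ((M : Matrix (Fin 2) (Fin 2) ℂ).mulVec p.rep)

/-- The BMS transformation with data `(M, α)`:
`(p, u) ↦ (M • p, K_M(p)·(u + α(p)))`. -/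
def bms (M : SL2C) (α : P1C → ℝ) : P1C × ℝ → P1C × ℝ :=
  fun q => (mobAct M q.1, Kconf M q.1 * (q.2 + α q.1))

/-- `σ_M(α)(p) = K_M(p)⁻¹ · α(M • p)`. -/
def sigmaAct (M : SL2C) (α : P1C → ℝ) : P1C → ℝ :=
  fun p => (Kconf M p)⁻¹ * α (mobAct M p)

/-- The BMS group `𝓑`, as the set of all BMS transformations. -/
def BMSSet : Set ((P1C × ℝ) → (P1C × ℝ)) := {f | ∃ M α, f = bms M α}

/-- The supertranslations `𝓢`: BMS transformations with data `(1, α)`. -/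
def Supertranslations : Set ((P1C × ℝ) → (P1C × ℝ)) := {f | ∃ α, f = bms 1 α}

/-- The 'Lorentz' elements `𝓛`: BMS transformations with data `(M, 0)`. -/
def LorentzSet : Set ((P1C × ℝ) → (P1C × ℝ)) := {f | ∃ M, f = bms M 0}

/-- The translation function `α_H([v]) = (vᴴ H v)/‖v‖²` attached to a Hermitian matrix `H`. -/
def transl (H : Matrix (Fin 2) (Fin 2) ℂ) : P1C → ℝ :=
  fun p => (star p.rep ⬝ᵥ H.mulVec p.rep).re / hermNormSq p.rep

/-- `α : ℙ¹(ℂ) → ℝ` is a translation if `α = α_H` for some Hermitian `H`. -/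
def IsTranslationFn (α : P1C → ℝ) : Prop :=
  ∃ H : Matrix (Fin 2) (Fin 2) ℂ, H.IsHermitian ∧ α = transl H

/-- The translation subgroup `𝓣`: BMS transformations with data `(±1, α_H)`. -/
def TranslSet : Set ((P1C × ℝ) → (P1C × ℝ)) :=
  {f | ∃ (M : SL2C) (α : P1C → ℝ), (M = 1 ∨ M = -1) ∧ IsTranslationFn α ∧ f = bms M α}

/-- `PSL(2, ℂ)`, the quotient of `SL(2, ℂ)` by its center `{1, -1}`. -/
abbrev PSL2C := SL2C ⧸ Subgroup.center SL2C

/-- The good cut of a translation: the graph of `α_H` in `ℙ¹(ℂ) × ℝ`. -/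
def goodCut (H : Matrix (Fin 2) (Fin 2) ℂ) : Set (P1C × ℝ) :=
  {q | q.2 = transl H q.1}


lemma hermNormSq_eq (v : Fin 2 → ℂ) : hermNormSq v = ∑ i, Complex.normSq (v i) := by
  simp [hermNormSq, dotProduct, Complex.re_sum, Complex.normSq_apply, mul_comm]

lemma hermNormSq_pos {v : Fin 2 → ℂ} (hv : v ≠ 0) : 0 < hermNormSq v := by
  rw [hermNormSq_eq]
  obtain ⟨i, hi⟩ := Function.ne_iff.mp hv
  exact Finset.sum_pos' (fun j _ => Complex.normSq_nonneg _)
    ⟨i, Finset.mem_univ i, Complex.normSq_pos.mpr hi⟩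

lemma hermNormSq_smul (c : ℂ) (v : Fin 2 → ℂ) :
    hermNormSq (c • v) = Complex.normSq c * hermNormSq v := by
  simp [hermNormSq_eq, Complex.normSq_mul, Finset.mul_sum, mul_add]

lemma rep_mk_smul {w : Fin 2 → ℂ} (hw : w ≠ 0) :
    ∃ a : ℂˣ, (Projectivization.mk ℂ w hw).rep = (a : ℂ) • w := by
  obtain ⟨a, ha⟩ := (Projectivization.mk_eq_mk_iff ℂ _ _
    (Projectivization.rep_nonzero _) hw).mp (Projectivization.mk_rep (Projectivization.mk ℂ w hw))
  exact ⟨a, ha.symm⟩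

lemma mobAct_mk (M : SL2C) {w : Fin 2 → ℂ} (hw : w ≠ 0) :
    mobAct M (Projectivization.mk ℂ w hw) =
      Projectivization.mk ℂ ((M : Matrix (Fin 2) (Fin 2) ℂ).mulVec w)
        (SL2C.mulVec_ne_zero M hw) := by
  obtain ⟨a, ha⟩ := rep_mk_smul hw
  unfold mobAct
  apply (Projectivization.mk_eq_mk_iff ℂ _ _ _ _).mpr
  exact ⟨a, by rw [ha, Matrix.mulVec_smul]; rfl⟩

lemma Kconf_mk (M : SL2C) {w : Fin 2 → ℂ} (hw : w ≠ 0) :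
    Kconf M (Projectivization.mk ℂ w hw) =
      hermNormSq w / hermNormSq ((M : Matrix (Fin 2) (Fin 2) ℂ).mulVec w) := by
  obtain ⟨a, ha⟩ := rep_mk_smul hw
  unfold Kconf
  rw [ha, Matrix.mulVec_smul, hermNormSq_smul, hermNormSq_smul,
    mul_div_mul_left _ _ (by simpa using a.ne_zero : Complex.normSq (a : ℂ) ≠ 0)]

lemma Kconf_pos (M : SL2C) (p : P1C) : 0 < Kconf M p :=
  div_pos (hermNormSq_pos p.rep_nonzero)
    (hermNormSq_pos (SL2C.mulVec_ne_zero M p.rep_nonzero))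

lemma mobAct_one (p : P1C) : mobAct 1 p = p := by
  unfold mobAct
  simp only [Matrix.SpecialLinearGroup.coe_one, Matrix.one_mulVec]
  exact Projectivization.mk_rep p

lemma Kconf_one (p : P1C) : Kconf 1 p = 1 := by
  unfold Kconf
  simp only [Matrix.SpecialLinearGroup.coe_one, Matrix.one_mulVec]
  exact div_self (hermNormSq_pos p.rep_nonzero).ne'

lemma mobAct_mul (M N : SL2C) (p : P1C) : mobAct (M * N) p = mobAct M (mobAct N p) := by
  rw [show mobAct N p = Projectivization.mk ℂ ((N : Matrix (Fin 2) (Fin 2) ℂ).mulVec p.rep)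
    (SL2C.mulVec_ne_zero N p.rep_nonzero) from rfl, mobAct_mk]
  unfold mobAct
  congr 1
  rw [Matrix.SpecialLinearGroup.coe_mul, ← Matrix.mulVec_mulVec]

lemma Kconf_mul (M N : SL2C) (p : P1C) :
    Kconf (M * N) p = Kconf M (mobAct N p) * Kconf N p := by
  unfold mobAct
  rw [Kconf_mk]
  unfold Kconf
  rw [Matrix.SpecialLinearGroup.coe_mul, ← Matrix.mulVec_mulVec]
  have h1 := (hermNormSq_pos p.rep_nonzero).ne'
  have h2 := (hermNormSq_pos (SL2C.mulVec_ne_zero N p.rep_nonzero)).ne'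
  field_simp

lemma bms_comp (M N : SL2C) (α β : P1C → ℝ) :
    bms M α ∘ bms N β =
      bms (M * N) (fun p => β p + (Kconf N p)⁻¹ * α (mobAct N p)) := by
  funext q
  unfold bms
  simp only [Function.comp_apply]
  refine Prod.ext (mobAct_mul M N q.1).symm ?_
  simp only [Kconf_mul]
  have h := (Kconf_pos N q.1).ne'
  field_simp
  ring

lemma bms_one_zero : bms 1 0 = id := by
  funext q
  simp [bms, mobAct_one, Kconf_one]

lemma bms_eq_data {M N : SL2C} {α β : P1C → ℝ} (h : bms M α = bms N β) :
    (∀ p, mobAct M p = mobAct N p) ∧ (∀ p, Kconf M p = Kconf N p) ∧ α = β := by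
  have h1 : ∀ p u, mobAct M p = mobAct N p ∧ Kconf M p * (u + α p) = Kconf N p * (u + β p) := by
    intro p u
    have := congrFun h (p, u)
    exact ⟨congrArg Prod.fst this, congrArg Prod.snd this⟩
  have hK : ∀ p, Kconf M p = Kconf N p := by
    intro p
    have e0 := (h1 p (1 - α p)).2
    have e1 := (h1 p (-α p)).2
    simp only [neg_add_cancel, mul_zero] at e1
    rw [sub_add_cancel, mul_one] at e0
    nlinarith [e0, e1]
  refine ⟨fun p => (h1 p 0).1, hK, funext fun p => ?_⟩
  have e0 := (h1 p 0).2
  rw [hK p] at e0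
  have hne := (Kconf_pos N p).ne'
  have := mul_left_cancel₀ hne e0
  simpa using this

lemma bms_zero_comp (M : SL2C) (α : P1C → ℝ) : bms M α = bms M 0 ∘ bms 1 α := by
  rw [bms_comp, mul_one]
  congr 1
  funext p
  simp

/-- The Lorentz elements `𝓛` (data `(M, 0)`) form a subgroup of `𝓑` with
`𝓛 ∩ 𝓢 = {id}`, and every `b ∈ 𝓑` factors uniquely as `b = Λ ∘ s` with `Λ ∈ 𝓛`,
`s ∈ 𝓢`; explicitly, the BMS transformation with data `(M, α)` is the composite of the
element with data `(M, 0)` after the supertranslation with data `(1, α)`. -/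
theorem lorentz_supertranslation_factorization :
    (id ∈ LorentzSet) ∧
    (∀ f ∈ LorentzSet, ∀ g ∈ LorentzSet, f ∘ g ∈ LorentzSet) ∧
    (∀ f ∈ LorentzSet, ∃ g ∈ LorentzSet, g ∘ f = id ∧ f ∘ g = id) ∧
    (LorentzSet ∩ Supertranslations = {id}) ∧
    (∀ b ∈ BMSSet, ∃! Λs : ((P1C × ℝ) → (P1C × ℝ)) × ((P1C × ℝ) → (P1C × ℝ)),
      Λs.1 ∈ LorentzSet ∧ Λs.2 ∈ Supertranslations ∧ b = Λs.1 ∘ Λs.2) ∧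
    (∀ (M : SL2C) (α : P1C → ℝ), bms M α = (bms M 0) ∘ (bms 1 α)) := by
  constructor
  · exact ⟨1, bms_one_zero.symm⟩
  refine ⟨?_, ?_, ?_, ?_, ?_⟩
  · rintro f ⟨M, rfl⟩ g ⟨N, rfl⟩
    refine ⟨M * N, ?_⟩
    rw [bms_comp, show (fun p => (0 : P1C → ℝ) p + (Kconf N p)⁻¹ * (0 : P1C → ℝ) (mobAct N p))
      = (0 : P1C → ℝ) by funext p; simp]
  · rintro f ⟨M, rfl⟩
    refine ⟨bms M⁻¹ 0, ⟨M⁻¹, rfl⟩, ?_, ?_⟩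
    · rw [bms_comp]
      simp only [inv_mul_cancel]
      rw [show (fun p => (0 : P1C → ℝ) p + (Kconf M p)⁻¹ * (0 : P1C → ℝ) (mobAct M p)) = 0 by
        funext p; simp]
      exact bms_one_zero
    · rw [bms_comp]
      simp only [mul_inv_cancel]
      rw [show (fun p => (0 : P1C → ℝ) p + (Kconf M⁻¹ p)⁻¹ * (0 : P1C → ℝ) (mobAct M⁻¹ p)) = 0 by
        funext p; simp]
      exact bms_one_zero
  · ext f
    simp only [Set.mem_inter_iff, Set.mem_singleton_iff]
    constructor
    · rintro ⟨⟨M, rfl⟩, ⟨α, hα⟩⟩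
      obtain ⟨_, _, hαβ⟩ := bms_eq_data hα
      rw [hα, ← hαβ, bms_one_zero]
    · rintro rfl
      exact ⟨⟨1, bms_one_zero.symm⟩, ⟨0, bms_one_zero.symm⟩⟩
  · rintro b ⟨M, α, rfl⟩
    refine ⟨(bms M 0, bms 1 α), ⟨⟨M, rfl⟩, ⟨α, rfl⟩, bms_zero_comp M α⟩, ?_⟩
    rintro ⟨Λ, s⟩ ⟨⟨N, rfl⟩, ⟨β, rfl⟩, hb⟩
    rw [← bms_zero_comp] at hb
    obtain ⟨hmob, hK, hαβ⟩ := bms_eq_data hb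
    refine Prod.ext ?_ ?_
    · funext q
      exact Prod.ext (hmob q.1).symm (by simp [bms, (hK q.1).symm])
    · rw [← hαβ]
  · exact bms_zero_comp
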